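/- The determinant symbol ν_L(f,g) := ν₁(f)ν₂(g) − ν₂(f)ν₁(g) vanishes whenever f + g = 1 (with f, g, 1−f all nonzero), provided the rank-2 valuation (ν₁,ν₂) is ordered lexicographically and satisfies the ultrametric inequality: ν(x+y) ≥ min(ν(x), ν(y)) in the lexicographic order on ℤ ⊕ ℤ. Hence ν_L factors through K₂(L). -/

import Mathlib

/-- The determinant symbol of a lexicographically ordered rank-2 valuation satisfying the
ultrametric inequality vanishes on Steinberg pairs `f + g = 1`; hence it factors through
`K₂(L)`. -/
theorem stmt9 {L : Type*} [Field L] (ν₁ ν₂ : Lˣ → ℤ)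
    (h₁ : ∀ a b : Lˣ, ν₁ (a * b) = ν₁ a + ν₁ b)
    (h₂ : ∀ a b : Lˣ, ν₂ (a * b) = ν₂ a + ν₂ b)
    (hsurj : Function.Surjective fun x : Lˣ => (ν₁ x, ν₂ x))
    (hultra : ∀ x y z : Lˣ, (x : L) + (y : L) = (z : L) →
      min (toLex ((ν₁ x, ν₂ x) : ℤ × ℤ)) (toLex ((ν₁ y, ν₂ y) : ℤ × ℤ))
        ≤ toLex ((ν₁ z, ν₂ z) : ℤ × ℤ))
    (f g : Lˣ) (hfg : (f : L) + (g : L) = 1) :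
    ν₁ f * ν₂ g - ν₂ f * ν₁ g = 0 := by
  have hν₁1 : ν₁ 1 = 0 := by have := h₁ 1 1; rw [one_mul] at this; omega
  have hν₂1 : ν₂ 1 = 0 := by have := h₂ 1 1; rw [one_mul] at this; omega
  have hν₁m : ν₁ (-1) = 0 := by
    have := h₁ (-1) (-1); rw [neg_mul_neg, one_mul, hν₁1] at this; omega
  have hν₂m : ν₂ (-1) = 0 := by
    have := h₂ (-1) (-1); rw [neg_mul_neg, one_mul, hν₂1] at this; omega
  have hν₁n : ∀ x : Lˣ, ν₁ (-x) = ν₁ x := by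
    intro x; rw [← neg_one_mul, h₁, hν₁m, zero_add]
  have hν₂n : ∀ x : Lˣ, ν₂ (-x) = ν₂ x := by
    intro x; rw [← neg_one_mul, h₂, hν₂m, zero_add]
  have A := hultra f g 1 (by rw [Units.val_one]; exact hfg)
  have B := hultra 1 (-f) g (by
    rw [Units.val_neg, Units.val_one]; linear_combination -hfg)
  have C := hultra 1 (-g) f (by
    rw [Units.val_neg, Units.val_one]; linear_combination -hfg)
  rw [hν₁n, hν₂n] at B
  rw [hν₁n, hν₂n] at C
  rw [hν₁1, hν₂1] at A B C
  simp only [min_le_iff, Prod.Lex.le_iff, ofLex_toLex] at A B C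
  have key : (ν₁ f = 0 ∧ ν₂ f = 0) ∨ (ν₁ g = 0 ∧ ν₂ g = 0) ∨
      (ν₁ f = ν₁ g ∧ ν₂ f = ν₂ g) := by omega
  rcases key with ⟨e1, e2⟩ | ⟨e1, e2⟩ | ⟨e1, e2⟩ <;> rw [e1, e2] <;> ring
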